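/- Let p ∈ (1,∞). For each fixed y ∈ (0,1), G_a(y) → ∞ as a → 0⁺. -/

import Mathlib

open Set Real Filter MeasureTheory

noncomputable def Fa (p a y w : ℝ) : ℝ :=
  (8*p*(1/a + 2*y) + (2*p/a + 4*(3*p - 2)*y + 2*(p - 1)*y*w)*w) / (y^2 * (4 + (p - 1)*w))

def IsGFamily (p : ℝ) (G : ℝ → ℝ → ℝ) : Prop :=
  ∀ a : ℝ, 0 < a →
    ContinuousOn (G a) (Set.Ioc 0 1) ∧
    G a 1 = 0 ∧
    (∀ y ∈ Set.Ioo (0:ℝ) 1, HasDerivAt (G a) (-(Fa p a y (G a y))) y) ∧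
    (∀ y ∈ Set.Ioo (0:ℝ) 1, 0 < G a y) ∧
    StrictAntiOn (G a) (Set.Ioc 0 1)

lemma Fa_lower (p a s w : ℝ) (hp : 1 < p) (ha : 0 < a) (hs : s ∈ Set.Ioo (0:ℝ) 1)
    (hw : 0 ≤ w) : 2 / a ≤ Fa p a s w := by
  obtain ⟨hs0, hs1⟩ := hs
  have hD : 0 < s^2 * (4 + (p - 1)*w) :=
    mul_pos (pow_pos hs0 2) (by nlinarith)
  rw [Fa, le_div_iff₀ hD, div_mul_eq_mul_div, div_le_iff₀ ha]
  have key : (8*p*(1/a + 2*s) + (2*p/a + 4*(3*p - 2)*s + 2*(p - 1)*s*w)*w) * a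
      = 8*p*(1 + 2*s*a) + (2*p + (4*(3*p-2)*s + 2*(p-1)*s*w)*a)*w := by
    field_simp
    ring_nf
  rw [key]
  nlinarith [mul_nonneg (by nlinarith : (0:ℝ) ≤ 1 - s^2) (by nlinarith : (0:ℝ) ≤ 4+(p-1)*w),
    mul_nonneg (mul_nonneg hs0.le ha.le) hw,
    mul_nonneg (mul_nonneg (mul_nonneg hs0.le ha.le) hw) hw,
    mul_pos hs0 ha, hw, hp]

lemma G_lower (p : ℝ) (hp : 1 < p) (G : ℝ → ℝ → ℝ) (hG : IsGFamily p G)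
    (y : ℝ) (hy : y ∈ Set.Ioo (0:ℝ) 1) (a : ℝ) (ha : 0 < a) :
    2 / a * (1 - y) ≤ G a y := by
  obtain ⟨hc, h1, hderiv, hpos, _⟩ := hG a ha
  obtain ⟨hy0, hy1⟩ := hy
  set h : ℝ → ℝ := fun t => G a t + 2/a * t with hh
  have hanti : AntitoneOn h (Set.Icc y 1) := by
    have hsub : Set.Icc y 1 ⊆ Set.Ioc 0 1 := fun t ht => ⟨lt_of_lt_of_le hy0 ht.1, ht.2⟩
    have hcont : ContinuousOn h (Set.Icc y 1) := by
      exact ((hc.mono hsub).add ((continuous_const.mul continuous_id).continuousOn))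
    have hint : interior (Set.Icc y 1) = Set.Ioo y 1 := interior_Icc
    apply antitoneOn_of_deriv_nonpos (convex_Icc y 1) hcont
    · rw [hint]
      intro x hx
      have hx' : x ∈ Set.Ioo (0:ℝ) 1 := ⟨lt_trans hy0 hx.1, hx.2⟩
      exact ((hderiv x hx').add ((hasDerivAt_id x).const_mul (2/a))).differentiableAt.differentiableWithinAt
    · rw [hint]
      intro x hx
      have hx' : x ∈ Set.Ioo (0:ℝ) 1 := ⟨lt_trans hy0 hx.1, hx.2⟩
      have hd : HasDerivAt h (-(Fa p a x (G a x)) + 2/a * 1) x :=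
        (hderiv x hx').add ((hasDerivAt_id x).const_mul (2/a))
      rw [hd.deriv]
      have := Fa_lower p a x (G a x) hp ha hx' (hpos x hx').le
      linarith
  have := hanti (Set.left_mem_Icc.2 hy1.le) (Set.right_mem_Icc.2 hy1.le) hy1.le
  simp only [hh, h1] at this
  nlinarith

theorem G_tendsto_atTop_as_a_to_zero (p : ℝ) (hp : 1 < p) (G : ℝ → ℝ → ℝ)
    (hG : IsGFamily p G) :
    ∀ y ∈ Set.Ioo (0:ℝ) 1,
      Filter.Tendsto (fun a => G a y) (nhdsWithin 0 (Set.Ioi 0)) Filter.atTop := by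
  intro y hy
  have hbase : Tendsto (fun a : ℝ => 2 * (1 - y) * a⁻¹) (nhdsWithin 0 (Set.Ioi 0)) atTop :=
    Tendsto.const_mul_atTop (by nlinarith [hy.2] : (0:ℝ) < 2 * (1 - y)) tendsto_inv_nhdsGT_zero
  apply tendsto_atTop_mono' _ _ hbase
  filter_upwards [self_mem_nhdsWithin] with a (ha : a ∈ Set.Ioi 0)
  have := G_lower p hp G hG y hy a ha
  calc 2 * (1 - y) * a⁻¹ = 2 / a * (1 - y) := by ring
    _ ≤ G a y := this
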